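/- Let K be a field of characteristic p > 0, q = p^n, r ≥ 2. Let b, c ∈ K with b ≠ 0, b = (-1)^{r-1} b^{q^{2r}}, and c^q + c = b^{q^r+1}. If x, y ∈ K satisfy y^{q^r+1} = x^q + x, then setting X = g_b(y) + c + x and Y = y + b, one has Y^{q^r+1} = X^q + X. That is, the map γ(x,y) = (g_b(y) + c + x, y + b) maps the curve G_r : y^{q^r+1} = x^q + x to itself. -/

import Mathlib

noncomputable def gb (K : Type*) [Field K] (q r : ℕ) (b : K) (y : K) : K :=
  ∑ i ∈ Finset.range r, (-1 : K) ^ i * b ^ (q ^ (i + r)) * y ^ (q ^ i)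

theorem stmt9 (K : Type*) [Field K] (p n r : ℕ) (hp : p.Prime) [CharP K p]
    (hn : 0 < n) (hr : 2 ≤ r) (q : ℕ) (hq : q = p ^ n)
    (b c : K) (hb0 : b ≠ 0) (hb : b = (-1) ^ (r - 1) * b ^ (q ^ (2 * r)))
    (hc : c ^ q + c = b ^ (q ^ r + 1))
    (x y : K) (h : y ^ (q ^ r + 1) = x ^ q + x) :
    (y + b) ^ (q ^ r + 1)
      = (gb K q r b y + c + x) ^ q + (gb K q r b y + c + x) := by
  have hfact : Fact p.Prime := ⟨hp⟩
  -- Frobenius additivity for q-th powers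
  have hfrob : ∀ m : ℕ, ∀ a b : K, (a + b) ^ q ^ m = a ^ q ^ m + b ^ q ^ m := by
    intro m a b
    subst hq
    simp only [← pow_mul]
    exact add_pow_char_pow a b p (n*m)
  have hfrob1 : ∀ a b : K, (a + b) ^ q = a ^ q + b ^ q := by
    intro a b
    have := hfrob 1 a b
    simpa using this
  have hqpos : 0 < q := by subst hq; exact pow_pos hp.pos n
  have hneg : (-1 : K) ^ q = -1 := by
    have h1 := hfrob1 (-1 : K) 1
    rw [neg_add_cancel, one_pow, zero_pow hqpos.ne'] at h1
    exact eq_neg_of_add_eq_zero_left h1.symm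
  set T : ℕ → K := fun i => (-1 : K) ^ i * b ^ q ^ (i + r) * y ^ q ^ i with hTdef
  have hT : ∀ i, (T i) ^ q = - T (i + 1) := by
    intro i
    simp only [hTdef]
    rw [mul_pow, mul_pow, ← pow_mul b, ← pow_mul y, ← pow_succ q (i + r), ← pow_succ q i,
      ← pow_mul (-1 : K), mul_comm i q, pow_mul (-1 : K), hneg,
      show i + r + 1 = i + 1 + r from by ring]
    ring
  -- sum over q-th power
  have hsum : ∀ (s : Finset ℕ) (f : ℕ → K), (∑ i ∈ s, f i) ^ q = ∑ i ∈ s, f i ^ q := by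
    intro s f
    subst hq
    exact sum_pow_char_pow p n s f
  have hg : (gb K q r b y) ^ q + gb K q r b y = T 0 - T r := by
    have h1 : (gb K q r b y) ^ q = -∑ i ∈ Finset.range r, T (i + 1) := by
      rw [gb, hsum]
      simp only [show ∀ i, ((-1 : K) ^ i * b ^ q ^ (i + r) * y ^ q ^ i) ^ q = - T (i + 1) from hT]
      rw [Finset.sum_neg_distrib]
    have h2 : ∑ i ∈ Finset.range r, T (i + 1) = (gb K q r b y + T r) - T 0 := by
      have := Finset.sum_range_succ' T r
      rw [Finset.sum_range_succ T r] at this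
      have hgb : gb K q r b y = ∑ i ∈ Finset.range r, T i := rfl
      rw [hgb]
      linear_combination this.symm
    rw [h1, h2]
    ring
  have hT0 : T 0 = b ^ q ^ r * y := by simp [hTdef]
  have hTr : - T r = (-1 : K) ^ (r - 1) * b ^ q ^ (2 * r) * y ^ q ^ r := by
    simp only [hTdef]
    have : r = (r - 1) + 1 := (Nat.succ_pred_eq_of_pos (by omega)).symm
    rw [two_mul, show r + r = r - 1 + 1 + r from by omega]
    nth_rewrite 1 [this]
    rw [pow_succ]
    ring
  have hg' : (gb K q r b y) ^ q + gb K q r b y = b ^ q ^ r * y + b * y ^ q ^ r := by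
    rw [hg, sub_eq_add_neg, hT0, hTr]
    linear_combination -(y ^ q ^ r) * hb
  -- Frobenius for q^r
  have hfr : (y + b) ^ q ^ r = y ^ q ^ r + b ^ q ^ r := hfrob r y b
  calc (y + b) ^ (q ^ r + 1) = (y ^ q ^ r + b ^ q ^ r) * (y + b) := by
        rw [pow_succ, hfr]
    _ = y ^ (q ^ r + 1) + b * y ^ q ^ r + b ^ q ^ r * y + b ^ (q ^ r + 1) := by
        rw [pow_succ, pow_succ]; ring
    _ = ((gb K q r b y) ^ q + gb K q r b y) + (c ^ q + c) + (x ^ q + x) := by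
        rw [hg', hc, h]; ring
    _ = (gb K q r b y + c + x) ^ q + (gb K q r b y + c + x) := by
        rw [hfrob1, hfrob1]; ring
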